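/- arXiv:2111.04578 — 2 statements merged into one kernel-verified Lean document; each statement's English description precedes it below -/
import Mathlib

section
/- Let f_W be an L-layer feedforward network with weights W = (W_1, …, W_L) and 1-Lipschitz, origin-preserving activations. Let U = (U_1, …, U_L) be perturbation matrices with U_i of the same shape as W_i, and suppose ‖U_i‖_2 ≤ e for every i = 1, …, L and some e ≥ 0. Then for every input x ∈ ℝ^{d_0}, ‖f_{W+U}(x) − f_W(x)‖_2 ≤ e · ‖x‖_2 · Σ_{i=1}^{L} Π_{j=1}^{L} (‖W_j‖_2 + e) / (‖W_i‖_2 + e), where f_{W+U} denotes the network with weights (W_1 + U_1, …, W_L + U_L). -/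
open MeasureTheory ProbabilityTheory Finset

noncomputable def specNorm {m n : ℕ} (M : Matrix (Fin m) (Fin n) ℝ) : ℝ :=
  ‖LinearMap.toContinuousLinearMap (Matrix.toEuclideanLin M)‖

noncomputable def frobNorm {m n : ℕ} (M : Matrix (Fin m) (Fin n) ℝ) : ℝ :=
  Real.sqrt (∑ i, ∑ j, (M i j)^2)

noncomputable def netOutput (d : ℕ → ℕ)
    (W : ∀ i : ℕ, Matrix (Fin (d (i+1))) (Fin (d i)) ℝ)
    (ψ : ∀ i : ℕ, EuclideanSpace ℝ (Fin (d (i+1))) → EuclideanSpace ℝ (Fin (d (i+1)))) :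
    (k : ℕ) → EuclideanSpace ℝ (Fin (d 0)) → EuclideanSpace ℝ (Fin (d k))
  | 0 => fun x => x
  | (k+1) => fun x => ψ k (Matrix.toEuclideanLin (W k) (netOutput d W ψ k x))

instance {m n R : Type*} [MeasurableSpace R] : MeasurableSpace (Matrix m n R) :=
  inferInstanceAs (MeasurableSpace (m → n → R))

noncomputable def gaussianMatrix (d₁ d₂ : ℕ) (σ : ℝ) :
    Measure (Matrix (Fin d₁) (Fin d₂) ℝ) :=
  Measure.pi fun _ : Fin d₁ => Measure.pi fun _ : Fin d₂ => gaussianReal 0 (σ^2).toNNReal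

noncomputable def klDiv {α : Type*} [MeasurableSpace α] (P Q : Measure α) : ℝ :=
  ∫ x, Real.log (P.rnDeriv Q x).toReal ∂P

lemma specNorm_nonneg {m n : ℕ} (M : Matrix (Fin m) (Fin n) ℝ) : 0 ≤ specNorm M :=
  norm_nonneg _

lemma toEuclideanLin_apply_le {m n : ℕ} (M : Matrix (Fin m) (Fin n) ℝ)
    (v : EuclideanSpace ℝ (Fin n)) :
    ‖Matrix.toEuclideanLin M v‖ ≤ specNorm M * ‖v‖ := by
  have := (LinearMap.toContinuousLinearMap (Matrix.toEuclideanLin M)).le_opNorm v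
  simpa [specNorm] using this

lemma specNorm_add_le {m n : ℕ} (A B : Matrix (Fin m) (Fin n) ℝ) :
    specNorm (A + B) ≤ specNorm A + specNorm B := by
  unfold specNorm
  rw [map_add, map_add]
  exact norm_add_le _ _

lemma net_diff_bound (L : ℕ) (d : ℕ → ℕ)
    (W U : ∀ i : ℕ, Matrix (Fin (d (i+1))) (Fin (d i)) ℝ)
    (ψ : ∀ i : ℕ, EuclideanSpace ℝ (Fin (d (i+1))) → EuclideanSpace ℝ (Fin (d (i+1))))
    (hψ : ∀ i, LipschitzWith 1 (ψ i)) (hψ0 : ∀ i, ψ i 0 = 0)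
    (e : ℝ) (he : 0 ≤ e) (hU : ∀ i < L, specNorm (U i) ≤ e)
    (x : EuclideanSpace ℝ (Fin (d 0))) :
    ∀ k, k ≤ L →
      ‖netOutput d (fun i => W i + U i) ψ k x‖ ≤
        ‖x‖ * ∏ j ∈ Finset.range k, (specNorm (W j) + e) ∧
      ‖netOutput d (fun i => W i + U i) ψ k x - netOutput d W ψ k x‖ ≤
        e * ‖x‖ * ∑ i ∈ Finset.range k,
          ∏ j ∈ (Finset.range k).erase i, (specNorm (W j) + e) := by
  intro k
  induction k with
  | zero =>
    intro _
    simp [netOutput]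
  | succ k ih =>
    intro hk
    obtain ⟨h1, h2⟩ := ih (le_of_lt (Nat.lt_of_succ_le hk))
    set a : ℕ → ℝ := fun j => specNorm (W j) + e with ha
    have hanon : ∀ j, 0 ≤ a j := fun j => add_nonneg (specNorm_nonneg _) he
    set g' := netOutput d (fun i => W i + U i) ψ k x
    set g := netOutput d W ψ k x
    have hUk : specNorm (U k) ≤ e := hU k (Nat.lt_of_succ_le hk)
    have hlip : ∀ (u v : EuclideanSpace ℝ (Fin (d (k+1)))), ‖ψ k u - ψ k v‖ ≤ ‖u - v‖ := by
      intro u v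
      have := (hψ k).dist_le_mul u v
      simpa [dist_eq_norm] using this
    constructor
    · show ‖ψ k (Matrix.toEuclideanLin (W k + U k) g')‖ ≤ _
      have h0 : ‖ψ k (Matrix.toEuclideanLin (W k + U k) g')‖ ≤
          ‖Matrix.toEuclideanLin (W k + U k) g'‖ := by
        have := hlip (Matrix.toEuclideanLin (W k + U k) g') 0
        simpa [hψ0 k] using this
      have h3 : ‖Matrix.toEuclideanLin (W k + U k) g'‖ ≤ specNorm (W k + U k) * ‖g'‖ :=
        toEuclideanLin_apply_le _ _
      have h4 : specNorm (W k + U k) ≤ a k :=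
        le_trans (specNorm_add_le _ _) (add_le_add_right hUk _)
      calc ‖ψ k (Matrix.toEuclideanLin (W k + U k) g')‖
          ≤ specNorm (W k + U k) * ‖g'‖ := le_trans h0 h3
        _ ≤ a k * (‖x‖ * ∏ j ∈ Finset.range k, a j) := by
            apply mul_le_mul h4 h1 (norm_nonneg _) (hanon k)
        _ = ‖x‖ * ∏ j ∈ Finset.range (k+1), a j := by
            rw [Finset.prod_range_succ]; ring
    · show ‖ψ k (Matrix.toEuclideanLin (W k + U k) g') - ψ k (Matrix.toEuclideanLin (W k) g)‖ ≤ _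
      have key : ‖Matrix.toEuclideanLin (W k + U k) g' - Matrix.toEuclideanLin (W k) g‖ ≤
          specNorm (W k) * ‖g' - g‖ + e * ‖g'‖ := by
        have heq : Matrix.toEuclideanLin (W k + U k) g' - Matrix.toEuclideanLin (W k) g =
            Matrix.toEuclideanLin (W k) (g' - g) + Matrix.toEuclideanLin (U k) g' := by
          simp only [map_add, map_sub, LinearMap.add_apply]
          abel
        rw [heq]
        refine le_trans (norm_add_le _ _) (add_le_add (toEuclideanLin_apply_le _ _) ?_)
        refine le_trans (toEuclideanLin_apply_le _ _) ?_
        exact mul_le_mul_of_nonneg_right hUk (norm_nonneg _)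
      have main : specNorm (W k) * ‖g' - g‖ + e * ‖g'‖ ≤
          e * ‖x‖ * ∑ i ∈ Finset.range (k+1),
            ∏ j ∈ (Finset.range (k+1)).erase i, a j := by
        have s1 : specNorm (W k) * ‖g' - g‖ ≤
            a k * (e * ‖x‖ * ∑ i ∈ Finset.range k, ∏ j ∈ (Finset.range k).erase i, a j) := by
          apply mul_le_mul (le_add_of_nonneg_right he) h2 (norm_nonneg _) (hanon k)
        have s2 : e * ‖g'‖ ≤ e * (‖x‖ * ∏ j ∈ Finset.range k, a j) :=
          mul_le_mul_of_nonneg_left h1 he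
        have sum_eq : a k * (e * ‖x‖ * ∑ i ∈ Finset.range k, ∏ j ∈ (Finset.range k).erase i, a j)
            + e * (‖x‖ * ∏ j ∈ Finset.range k, a j) =
            e * ‖x‖ * ∑ i ∈ Finset.range (k+1), ∏ j ∈ (Finset.range (k+1)).erase i, a j := by
          have e1 : (Finset.range (k+1)).erase k = Finset.range k := by
            rw [Finset.range_add_one, Finset.erase_insert (by simp)]
          have e2 : ∀ i ∈ Finset.range k,
              ∏ j ∈ (Finset.range (k+1)).erase i, a j =
              a k * ∏ j ∈ (Finset.range k).erase i, a j := by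
            intro i hi
            simp only [Finset.mem_range] at hi
            rw [Finset.range_add_one, Finset.erase_insert_of_ne (by omega)]
            rw [Finset.prod_insert (by simp)]
          have e3 : ∑ i ∈ Finset.range k, ∏ j ∈ (Finset.range (k+1)).erase i, a j =
              a k * ∑ i ∈ Finset.range k, ∏ j ∈ (Finset.range k).erase i, a j := by
            rw [Finset.sum_congr rfl e2, Finset.mul_sum]
          rw [Finset.sum_range_succ, e3, e1]
          ring
        linarith [s1, s2]
      exact le_trans (hlip _ _) (le_trans key main)

/-- Deterministic perturbation bound for a feedforward network. -/
theorem net_perturbation_bound (L : ℕ) (hL : 0 < L) (d : ℕ → ℕ)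
    (W U : ∀ i : ℕ, Matrix (Fin (d (i+1))) (Fin (d i)) ℝ)
    (ψ : ∀ i : ℕ, EuclideanSpace ℝ (Fin (d (i+1))) → EuclideanSpace ℝ (Fin (d (i+1))))
    (hψ : ∀ i, LipschitzWith 1 (ψ i)) (hψ0 : ∀ i, ψ i 0 = 0)
    (e : ℝ) (he : 0 ≤ e) (hU : ∀ i < L, specNorm (U i) ≤ e)
    (x : EuclideanSpace ℝ (Fin (d 0))) :
    ‖netOutput d (fun i => W i + U i) ψ L x - netOutput d W ψ L x‖ ≤
      e * ‖x‖ * ∑ i ∈ Finset.range L,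
        (∏ j ∈ Finset.range L, (specNorm (W j) + e)) / (specNorm (W i) + e) := by
  by_cases hez : e = 0
  · subst hez
    have hzero : ∀ i < L, ∀ v : EuclideanSpace ℝ (Fin (d i)),
        Matrix.toEuclideanLin (U i) v = 0 := by
      intro i hi v
      have h := toEuclideanLin_apply_le (U i) v
      have : specNorm (U i) = 0 :=
        le_antisymm (hU i hi) (specNorm_nonneg _)
      rw [this, zero_mul] at h
      exact norm_le_zero_iff.mp h
    have heq : ∀ k, k ≤ L →
        netOutput d (fun i => W i + U i) ψ k x = netOutput d W ψ k x := by
      intro k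
      induction k with
      | zero => intro _; rfl
      | succ k ih =>
        intro hk
        show ψ k (Matrix.toEuclideanLin (W k + U k) _) = ψ k (Matrix.toEuclideanLin (W k) _)
        rw [ih (le_of_lt (Nat.lt_of_succ_le hk))]
        congr 1
        rw [map_add, LinearMap.add_apply, hzero k (Nat.lt_of_succ_le hk), add_zero]
    rw [heq L le_rfl]
    simp
  · have hepos : 0 < e := lt_of_le_of_ne he (Ne.symm hez)
    refine le_trans ((net_diff_bound L d W U ψ hψ hψ0 e he hU x L le_rfl).2) (le_of_eq ?_)
    congr 1
    apply Finset.sum_congr rfl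
    intro i hi
    have hai : specNorm (W i) + e ≠ 0 :=
      ne_of_gt (add_pos_of_nonneg_of_pos (specNorm_nonneg _) hepos)
    rw [eq_div_iff hai, Finset.prod_erase_mul _ _ hi]
end

section
/- Let L be a positive integer and let B_1, …, B_L and D_1, …, D_L be real numbers with B_k ≥ 1 and D_k ≥ 0 for every k. Set α = Σ_{i=1}^{L} Π_{j=1}^{L} (B_j + D_j) / (B_i + D_i). Then α ≥ L, and for every real e with 0 ≤ e ≤ 1/(6α), it holds that e ≤ (B_k + D_k)/(6L) for every k, and Σ_{i=1}^{L} Π_{j=1}^{L} (B_j + D_j + e) / (B_i + D_i + e) ≤ (3/2) · α. -/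
open MeasureTheory ProbabilityTheory Finset

theorem alpha_bounds (L : ℕ) (hL : 0 < L) (B D : ℕ → ℝ)
    (hB : ∀ k < L, 1 ≤ B k) (hD : ∀ k < L, 0 ≤ D k) :
    (L : ℝ) ≤ ∑ i ∈ Finset.range L, (∏ j ∈ Finset.range L, (B j + D j)) / (B i + D i) ∧
    ∀ e : ℝ, 0 ≤ e →
      e ≤ 1 / (6 * ∑ i ∈ Finset.range L,
          (∏ j ∈ Finset.range L, (B j + D j)) / (B i + D i)) →
      (∀ k < L, e ≤ (B k + D k) / (6 * L)) ∧
      (∑ i ∈ Finset.range L, (∏ j ∈ Finset.range L, (B j + D j + e)) / (B i + D i + e)) ≤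
        3 / 2 * ∑ i ∈ Finset.range L, (∏ j ∈ Finset.range L, (B j + D j)) / (B i + D i) := by
  have hc1 : ∀ k ∈ Finset.range L, (1:ℝ) ≤ B k + D k := by
    intro k hk
    simp only [Finset.mem_range] at hk
    have := hB k hk; have := hD k hk; linarith
  have hcpos : ∀ k ∈ Finset.range L, (0:ℝ) < B k + D k :=
    fun k hk => lt_of_lt_of_le one_pos (hc1 k hk)
  have hterm : ∀ i ∈ Finset.range L,
      (∏ j ∈ Finset.range L, (B j + D j)) / (B i + D i)
        = ∏ j ∈ (Finset.range L).erase i, (B j + D j) := by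
    intro i hi
    rw [← Finset.mul_prod_erase _ _ hi,
      mul_div_cancel_left₀ _ (ne_of_gt (hcpos i hi))]
  have hterm1 : ∀ i ∈ Finset.range L,
      (1:ℝ) ≤ (∏ j ∈ Finset.range L, (B j + D j)) / (B i + D i) := by
    intro i hi
    rw [hterm i hi]
    have := Finset.prod_le_prod (s := (Finset.range L).erase i)
      (f := fun _ => (1:ℝ)) (g := fun j => B j + D j)
      (fun j _ => zero_le_one) (fun j hj => hc1 j (Finset.mem_of_mem_erase hj))
    simpa using this
  have hαL : (L : ℝ) ≤ ∑ i ∈ Finset.range L,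
      (∏ j ∈ Finset.range L, (B j + D j)) / (B i + D i) := by
    calc (L : ℝ) = ∑ _i ∈ Finset.range L, (1:ℝ) := by simp
    _ ≤ _ := Finset.sum_le_sum hterm1
  refine ⟨hαL, ?_⟩
  intro e he0 he
  set α := ∑ i ∈ Finset.range L, (∏ j ∈ Finset.range L, (B j + D j)) / (B i + D i) with hα
  have hLpos : (0:ℝ) < L := Nat.cast_pos.mpr hL
  have hαpos : 0 < α := lt_of_lt_of_le hLpos hαL
  have heL : e ≤ 1 / (6 * L) := by
    calc e ≤ 1 / (6 * α) := he
    _ ≤ 1 / (6 * L) := by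
        apply one_div_le_one_div_of_le (by linarith)
        linarith
  have hLe : (L:ℝ) * e ≤ 1/6 := by
    have : (L:ℝ) * e ≤ (L:ℝ) * (1 / (6 * L)) := by
      exact mul_le_mul_of_nonneg_left heL (le_of_lt hLpos)
    rw [mul_one_div] at this
    have h6 : (L:ℝ) / (6 * L) = 1/6 := by field_simp
    linarith
  have he16 : e ≤ 1/6 := by
    have h1L : (1:ℝ) ≤ L := by exact_mod_cast hL
    nlinarith
  constructor
  · intro k hk
    have := hc1 k (Finset.mem_range.mpr hk)
    rw [le_div_iff₀ (by positivity)]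
    calc e * (6 * L) ≤ (1/(6*L)) * (6 * L) := by
          apply mul_le_mul_of_nonneg_right heL (by positivity)
    _ = 1 := by field_simp
    _ ≤ B k + D k := this
  · -- key power bound
    have hpow : (1 + e)^L ≤ 3/2 := by
      have h1 : (1:ℝ) - L * e ≤ (1 - e)^L := by
        have := one_add_mul_le_pow (a := -e) (by linarith) L
        simpa [sub_eq_add_neg, mul_comm] using this
      have h2 : (1 + e)^L * (1 - e)^L ≤ 1 := by
        rw [← mul_pow]
        apply pow_le_one₀ (by nlinarith) (by nlinarith)
      have h3 : (5/6 : ℝ) ≤ (1 - e)^L := by linarith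
      have h4 : (0:ℝ) < (1 + e)^L := by positivity
      nlinarith
    have hterm' : ∀ i ∈ Finset.range L,
        (∏ j ∈ Finset.range L, (B j + D j + e)) / (B i + D i + e)
          = ∏ j ∈ (Finset.range L).erase i, (B j + D j + e) := by
      intro i hi
      rw [← Finset.mul_prod_erase _ _ hi,
        mul_div_cancel_left₀ _ (ne_of_gt (by have := hcpos i hi; linarith))]
    have hkey : ∀ i ∈ Finset.range L,
        (∏ j ∈ Finset.range L, (B j + D j + e)) / (B i + D i + e)
          ≤ 3/2 * ((∏ j ∈ Finset.range L, (B j + D j)) / (B i + D i)) := by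
      intro i hi
      rw [hterm' i hi, hterm i hi]
      calc ∏ j ∈ (Finset.range L).erase i, (B j + D j + e)
          ≤ ∏ j ∈ (Finset.range L).erase i, ((B j + D j) * (1 + e)) := by
            apply Finset.prod_le_prod
            · intro j hj
              have := hcpos j (Finset.mem_of_mem_erase hj); linarith
            · intro j hj
              have := hc1 j (Finset.mem_of_mem_erase hj); nlinarith
      _ = (∏ j ∈ (Finset.range L).erase i, (B j + D j)) * (1 + e)^((Finset.range L).erase i).card := by
            rw [Finset.prod_mul_distrib, Finset.prod_const]
      _ ≤ (∏ j ∈ (Finset.range L).erase i, (B j + D j)) * (3/2) := by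
            apply mul_le_mul_of_nonneg_left _ (by
              apply Finset.prod_nonneg; intro j hj
              have := hcpos j (Finset.mem_of_mem_erase hj); linarith)
            calc (1 + e)^((Finset.range L).erase i).card
                ≤ (1 + e)^L := by
                  apply pow_le_pow_right₀ (by linarith)
                  calc ((Finset.range L).erase i).card ≤ (Finset.range L).card :=
                    Finset.card_le_card (Finset.erase_subset _ _)
                  _ = L := Finset.card_range L
            _ ≤ 3/2 := hpow
      _ = 3/2 * ∏ j ∈ (Finset.range L).erase i, (B j + D j) := by ring
    calc ∑ i ∈ Finset.range L, (∏ j ∈ Finset.range L, (B j + D j + e)) / (B i + D i + e)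
        ≤ ∑ i ∈ Finset.range L, 3/2 * ((∏ j ∈ Finset.range L, (B j + D j)) / (B i + D i)) :=
          Finset.sum_le_sum hkey
    _ = 3/2 * α := by rw [← Finset.mul_sum]
end
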